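/- Every Borel probability measure P on ℝ with P([0,∞)) = 1 whose CDF F_P(x) = P((−∞, x]) is concave on [0,∞) satisfies P((a,b]) ≤ (b − a)/b for all real 0 ≤ a < b; that is, 𝒰₀⁺ ⊆ 𝒱. -/

import Mathlib

open MeasureTheory Set

/-- `𝒰₀⁺`: Borel probability measures on `ℝ` concentrated on `[0,∞)` whose CDF is concave
on `[0,∞)`. -/
def U0plus : Set (Measure ℝ) :=
  {P | IsProbabilityMeasure P ∧ P (Ici (0 : ℝ)) = 1 ∧
    ConcaveOn ℝ (Ici (0 : ℝ)) (fun x => (P (Iic x)).toReal)}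

/-- `𝒱`: Borel probability measures on `ℝ` concentrated on `[0,∞)` satisfying the basic
inequality `P((a,b]) ≤ (b−a)/b` for all `0 ≤ a < b`. -/
def Vclass : Set (Measure ℝ) :=
  {P | IsProbabilityMeasure P ∧ P (Ici (0 : ℝ)) = 1 ∧
    ∀ a b : ℝ, 0 ≤ a → a < b → P (Ioc a b) ≤ ENNReal.ofReal ((b - a) / b)}

/-- **basic inequality for continuous monotone distributions.**
Every probability measure on `ℝ` concentrated on `[0,∞)` with concave CDF on `[0,∞)`
satisfies `P((a,b]) ≤ (b−a)/b` for all `0 ≤ a < b`; i.e. `𝒰₀⁺ ⊆ 𝒱`. -/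
theorem stmt15 : U0plus ⊆ Vclass := by
  rintro P ⟨hP, hIci, hconc⟩
  refine ⟨hP, hIci, fun a b ha hab => ?_⟩
  have hb : (0:ℝ) < b := lt_of_le_of_lt ha hab
  set F : ℝ → ℝ := fun x => (P (Iic x)).toReal with hF
  -- concavity inequality at 0 and b with weights (1 - a/b), a/b
  have hp : (0:ℝ) ≤ 1 - a / b := by
    have : a / b ≤ 1 := by
      rw [div_le_one hb]; exact hab.le
    linarith
  have hq : (0:ℝ) ≤ a / b := div_nonneg ha hb.le
  have hsum : (1 - a / b) + a / b = 1 := by ring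
  have hcomb := hconc.2 (x := 0) (y := b) (self_mem_Ici) (mem_Ici.mpr hb.le) hp hq hsum
  have hpt : (1 - a / b) • (0:ℝ) + (a / b) • b = a := by
    simp only [smul_eq_mul, mul_zero, zero_add]
    exact div_mul_cancel₀ a hb.ne'
  rw [hpt] at hcomb
  simp only [smul_eq_mul] at hcomb
  -- hcomb : (1 - a/b) * F 0 + (a/b) * F b ≤ F a
  have hFb1 : F b ≤ 1 := by
    have : P (Iic b) ≤ 1 := prob_le_one
    simpa [hF] using ENNReal.toReal_le_of_le_ofReal zero_le_one (by simpa using this)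
  have hF0 : 0 ≤ F 0 := ENNReal.toReal_nonneg
  have hmono : P (Iic a) ≤ P (Iic b) := measure_mono (Iic_subset_Iic.mpr hab.le)
  have hne : P (Iic b) ≠ ⊤ := measure_ne_top P _
  have hIoc : P (Ioc a b) = P (Iic b) - P (Iic a) := by
    rw [← Iic_sdiff_Iic, measure_diff (Iic_subset_Iic.mpr hab.le)
      measurableSet_Iic.nullMeasurableSet (measure_ne_top P _)]
  have htoReal : (P (Ioc a b)).toReal = F b - F a := by
    rw [hIoc, ENNReal.toReal_sub_of_le hmono hne]
  have key : (P (Ioc a b)).toReal ≤ (b - a) / b := by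
    rw [htoReal]
    have h1 : F b - F a ≤ F b - ((1 - a / b) * F 0 + (a / b) * F b) := by linarith
    have h2 : F b - ((1 - a / b) * F 0 + (a / b) * F b) = (1 - a / b) * (F b - F 0) := by
      ring
    have h3 : (1 - a / b) * (F b - F 0) ≤ (1 - a / b) * 1 :=
      mul_le_mul_of_nonneg_left (by linarith) hp
    have h4 : (1 - a / b) = (b - a) / b := by field_simp
    linarith
  rw [← ENNReal.ofReal_toReal (measure_ne_top P (Ioc a b))]
  exact ENNReal.ofReal_le_ofReal key
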